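/- If M_1 → M_0 → M → 0 is an exact sequence of R-modules, then Γ(M_0) → Γ(M) is surjective and its kernel is the ideal of Γ(M_0) generated by the image of the augmentation ideal Γ⁺(M_1) of Γ(M_1). -/

import Mathlib

open TensorProduct

universe u

/-- The relations defining the free divided power algebra on `M`: the generator
`X (m, n)` stands for `γ_n(m)`. -/
inductive DPRel (R : Type u) [CommRing R] (M : Type u) [AddCommGroup M] [Module R M] :
    MvPolynomial (M × ℕ) R → Prop
  | zero (m : M) : DPRel R M (MvPolynomial.X (m, 0) - 1)
  | smul (r : R) (m : M) (n : ℕ) :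
      DPRel R M (MvPolynomial.X (r • m, n) - MvPolynomial.C (r ^ n) * MvPolynomial.X (m, n))
  | add (m m' : M) (n : ℕ) :
      DPRel R M (MvPolynomial.X (m + m', n) -
        ∑ ij ∈ Finset.HasAntidiagonal.antidiagonal n, MvPolynomial.X (m, ij.1) * MvPolynomial.X (m', ij.2))
  | mul (m : M) (i j : ℕ) :
      DPRel R M (MvPolynomial.X (m, i) * MvPolynomial.X (m, j) -
        ((i + j).choose i : MvPolynomial (M × ℕ) R) * MvPolynomial.X (m, i + j))

/-- The free divided power algebra `Γ(M)` on the `R`-module `M`. -/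
def DPA (R : Type u) [CommRing R] (M : Type u) [AddCommGroup M] [Module R M] : Type u :=
  MvPolynomial (M × ℕ) R ⧸ Ideal.span {p | DPRel R M p}

variable (R : Type u) [CommRing R] (M : Type u) [AddCommGroup M] [Module R M]

noncomputable instance : CommRing (DPA R M) := Ideal.Quotient.commRing _
noncomputable instance : Algebra R (DPA R M) := Ideal.Quotient.algebra R

/-- The divided power `γ_n(m) ∈ Γ(M)`. -/
noncomputable def dpGamma (n : ℕ) (m : M) : DPA R M :=
  Ideal.Quotient.mk (Ideal.span {p | DPRel R M p}) (MvPolynomial.X (m, n))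

/-- The degree `n` piece `Γⁿ(M)` of `Γ(M)`: the span of products `∏ γ_{n_i}(m_i)`
with `∑ n_i = n`. -/
noncomputable def GammaPow (n : ℕ) : Submodule R (DPA R M) :=
  Submodule.span R {x | ∃ (k : ℕ) (ms : Fin k → M) (ns : Fin k → ℕ),
    (∑ i, ns i) = n ∧ x = ∏ i, dpGamma R M (ns i) (ms i)}

lemma dpGamma_mem (n : ℕ) (m : M) : dpGamma R M n m ∈ GammaPow R M n :=
  Submodule.subset_span ⟨1, fun _ => m, fun _ => n, by simp, by simp⟩

set_option maxHeartbeats 1000000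
set_option synthInstance.maxHeartbeats 400000

section Lemmas
variable {R M}

lemma dpa_rel_mem {p : MvPolynomial (M × ℕ) R} (hp : DPRel R M p) :
    Ideal.Quotient.mk (Ideal.span {q | DPRel R M q}) p = 0 :=
  Ideal.Quotient.eq_zero_iff_mem.mpr (Ideal.subset_span hp)

lemma dpGamma_zero (m : M) : dpGamma R M 0 m = 1 := by
  have h := dpa_rel_mem (DPRel.zero (R := R) m)
  rw [map_sub, map_one, sub_eq_zero] at h
  exact h

lemma dpGamma_smul (r : R) (n : ℕ) (m : M) :
    dpGamma R M n (r • m) = algebraMap R (DPA R M) (r ^ n) * dpGamma R M n m := by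
  have h := dpa_rel_mem (DPRel.smul r m n)
  rw [map_sub, map_mul, sub_eq_zero] at h
  rw [dpGamma, h]
  rfl

lemma dpGamma_add (m m' : M) (n : ℕ) :
    dpGamma R M n (m + m') =
      ∑ ij ∈ Finset.HasAntidiagonal.antidiagonal n, dpGamma R M ij.1 m * dpGamma R M ij.2 m' := by
  have h := dpa_rel_mem (DPRel.add (R := R) m m' n)
  rw [map_sub, map_sum, sub_eq_zero] at h
  simp only [map_mul] at h
  exact h

lemma dpGamma_mul (m : M) (i j : ℕ) :
    dpGamma R M i m * dpGamma R M j m =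
      ((i + j).choose i : DPA R M) * dpGamma R M (i + j) m := by
  have h := dpa_rel_mem (DPRel.mul (R := R) m i j)
  rw [map_sub, map_mul, map_mul, map_natCast, sub_eq_zero] at h
  exact h

lemma dpGamma_zero_val (n : ℕ) (hn : n ≠ 0) : dpGamma R M n (0 : M) = 0 := by
  have h := dpGamma_smul (R := R) (M := M) 0 n 0
  rw [smul_zero, zero_pow hn, map_zero, zero_mul] at h
  exact h

end Lemmas

/-- If `M₁ → M₀ → M → 0` is exact, then the induced map `Γ(M₀) → Γ(M)` (the
algebra map `G` with `G (γ_n m) = γ_n (g m)`) is surjective, with kernel the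
ideal generated by the image (under the induced map `F : Γ(M₁) → Γ(M₀)`) of the
augmentation ideal `Γ⁺(M₁) = ⊕_{n ≥ 1} Γⁿ(M₁)`. -/
theorem dpa_rightExact (M₁ M₀ : Type u) [AddCommGroup M₁] [Module R M₁]
    [AddCommGroup M₀] [Module R M₀]
    (f : M₁ →ₗ[R] M₀) (g : M₀ →ₗ[R] M)
    (hexact : Function.Exact f g) (hsurj : Function.Surjective g)
    (F : DPA R M₁ →ₐ[R] DPA R M₀)
    (hF : ∀ (n : ℕ) (m : M₁), F (dpGamma R M₁ n m) = dpGamma R M₀ n (f m))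
    (G : DPA R M₀ →ₐ[R] DPA R M)
    (hG : ∀ (n : ℕ) (m : M₀), G (dpGamma R M₀ n m) = dpGamma R M n (g m)) :
    Function.Surjective G ∧
      RingHom.ker G =
        Ideal.span (⇑F '' ↑(⨆ k : ℕ, ⨆ _ : k ≠ 0, GammaPow R M₁ k)) := by
  classical
  set I : Ideal (DPA R M₀) :=
    Ideal.span (⇑F '' ↑(⨆ k : ℕ, ⨆ _ : k ≠ 0, GammaPow R M₁ k)) with hIdef
  -- G ∘ F kills positive-degree pieces
  have hGF : ∀ z ∈ (⨆ k : ℕ, ⨆ _ : k ≠ 0, GammaPow R M₁ k), G (F z) = 0 := by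
    have : (⨆ k : ℕ, ⨆ _ : k ≠ 0, GammaPow R M₁ k) ≤
        LinearMap.ker ((G.comp F).toLinearMap) := by
      refine iSup_le fun k => iSup_le fun hk => ?_
      rw [GammaPow, Submodule.span_le]
      rintro x ⟨l, ms, ns, hsum, rfl⟩
      have hi : ∃ i, ns i ≠ 0 := by
        by_contra h
        push_neg at h
        exact hk (by rw [← hsum, Finset.sum_eq_zero fun i _ => h i])
      obtain ⟨i, hi⟩ := hi
      simp only [SetLike.mem_coe, LinearMap.mem_ker, AlgHom.toLinearMap_apply,
        AlgHom.comp_apply, map_prod]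
      refine Finset.prod_eq_zero (Finset.mem_univ i) ?_
      rw [hF, hG, hexact.apply_apply_eq_zero, dpGamma_zero_val _ hi]
    intro z hz
    exact this hz
  -- positive divided powers of f m₁ are in I
  have hFI : ∀ (n : ℕ), n ≠ 0 → ∀ m₁ : M₁, dpGamma R M₀ n (f m₁) ∈ I := by
    intro n hn m₁
    rw [← hF]
    refine Ideal.subset_span ⟨dpGamma R M₁ n m₁, ?_, rfl⟩
    exact SetLike.mem_coe.mpr <|
      (le_iSup₂ (f := fun k (_ : k ≠ 0) => GammaPow R M₁ k) n hn) (dpGamma_mem R M₁ n m₁)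
  -- key congruence mod I
  have key : ∀ (n : ℕ) (a b : M₀), g a = g b →
      Ideal.Quotient.mk I (dpGamma R M₀ n a) = Ideal.Quotient.mk I (dpGamma R M₀ n b) := by
    intro n a b hab
    obtain ⟨m₁, hm₁⟩ := (hexact (b - a)).mp (by rw [map_sub, hab, sub_self])
    have hb : b = a + f m₁ := by rw [hm₁]; abel
    rw [hb, dpGamma_add,
      show Finset.HasAntidiagonal.antidiagonal n = insert (n, 0) ((Finset.HasAntidiagonal.antidiagonal n).erase (n, 0)) from
        (Finset.insert_erase (by simp)).symm,
      Finset.sum_insert (Finset.notMem_erase _ _), dpGamma_zero, mul_one, map_add, map_sum]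
    rw [Finset.sum_eq_zero, add_zero]
    intro ij hij
    have h2 : ij.2 ≠ 0 := by
      intro h0
      have h1 : ij.1 = n := by
        have := (Finset.HasAntidiagonal.mem_antidiagonal.mp (Finset.mem_of_mem_erase hij))
        omega
      exact (Finset.ne_of_mem_erase hij) (Prod.ext h1 h0)
    exact Ideal.Quotient.eq_zero_iff_mem.mpr (I.mul_mem_left _ (hFI _ h2 m₁))
  -- a section of g
  obtain ⟨s, hs⟩ : ∃ s : M → M₀, ∀ m, g (s m) = m :=
    ⟨fun m => (hsurj m).choose, fun m => (hsurj m).choose_spec⟩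
  -- the inverse map
  set ψ : MvPolynomial (M × ℕ) R →ₐ[R] (DPA R M₀ ⧸ I) :=
    MvPolynomial.aeval (fun v => Ideal.Quotient.mk I (dpGamma R M₀ v.2 (s v.1))) with hψdef
  have hψX : ∀ (m : M) (n : ℕ), ψ (MvPolynomial.X (m, n)) =
      Ideal.Quotient.mk I (dpGamma R M₀ n (s m)) := fun m n => MvPolynomial.aeval_X _ _
  have halg : ∀ c : R, (Ideal.Quotient.mk I) (algebraMap R (DPA R M₀) c) =
      algebraMap R (DPA R M₀ ⧸ I) c := fun c => rfl
  have hrel : ∀ p, DPRel R M p → ψ p = 0 := by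
    intro p hp
    cases hp with
    | zero m =>
        rw [map_sub, map_one, hψX, dpGamma_zero, map_one, sub_self]
    | smul r m n =>
        rw [map_sub, map_mul, hψX, hψX, MvPolynomial.aeval_C,
          key n (s (r • m)) (r • s m) (by rw [hs, map_smul, hs]), dpGamma_smul, map_mul, halg,
          sub_self]
    | add m m' n =>
        rw [map_sub, sub_eq_zero, hψX,
          key n (s (m + m')) (s m + s m') (by rw [hs, map_add, hs, hs]), dpGamma_add,
          map_sum, map_sum]
        refine Finset.sum_congr rfl fun ij _ => ?_
        rw [map_mul, map_mul, hψX, hψX]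
    | mul m i j =>
        rw [map_sub, sub_eq_zero, map_mul, map_mul, hψX, hψX, hψX, ← map_mul, dpGamma_mul,
          map_mul, map_natCast, map_natCast]
  have hspan : Ideal.span {p | DPRel R M p} ≤ RingHom.ker ψ :=
    Ideal.span_le.mpr fun p hp => hrel p hp
  set φ : DPA R M →ₐ[R] (DPA R M₀ ⧸ I) :=
    Ideal.Quotient.liftₐ (Ideal.span {p | DPRel R M p}) ψ (fun a ha => hspan ha) with hφdef
  have hφmk : ∀ p : MvPolynomial (M × ℕ) R,
      φ (Ideal.Quotient.mk (Ideal.span {p | DPRel R M p}) p) = ψ p := fun p =>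
    Ideal.Quotient.lift_mk _ _ _
  -- surjectivity of G
  have hGsurj : Function.Surjective G := by
    intro x
    obtain ⟨p, rfl⟩ := Ideal.Quotient.mk_surjective x
    induction p using MvPolynomial.induction_on with
    | C a => exact ⟨algebraMap R _ a, by rw [AlgHom.commutes]; rfl⟩
    | add p q hp hq =>
        obtain ⟨y, hy⟩ := hp
        obtain ⟨z, hz⟩ := hq
        exact ⟨y + z, by rw [map_add, hy, hz, map_add]; rfl⟩
    | mul_X p v hp =>
        obtain ⟨y, hy⟩ := hp
        obtain ⟨m₀, hm₀⟩ := hsurj v.1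
        refine ⟨y * dpGamma R M₀ v.2 m₀, ?_⟩
        rw [map_mul, hy, hG, hm₀, map_mul]
        rfl
  -- φ ∘ G = mk I
  have hcomp : ∀ x : DPA R M₀, φ (G x) = Ideal.Quotient.mk I x := by
    intro x
    obtain ⟨p, rfl⟩ := Ideal.Quotient.mk_surjective x
    induction p using MvPolynomial.induction_on with
    | C a =>
        have h1 : (Ideal.Quotient.mk (Ideal.span {p | DPRel R M₀ p})) (MvPolynomial.C a) =
            algebraMap R (DPA R M₀) a := rfl
        rw [h1, AlgHom.commutes, AlgHom.commutes, halg]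
    | add p q hp hq =>
        change φ (G (@HAdd.hAdd (DPA R M₀) (DPA R M₀) (DPA R M₀) _ (Ideal.Quotient.mk (Ideal.span {p | DPRel R M₀ p}) p) (Ideal.Quotient.mk (Ideal.span {p | DPRel R M₀ p}) q))) =
          Ideal.Quotient.mk I (@HAdd.hAdd (DPA R M₀) (DPA R M₀) (DPA R M₀) _ (Ideal.Quotient.mk (Ideal.span {p | DPRel R M₀ p}) p) (Ideal.Quotient.mk (Ideal.span {p | DPRel R M₀ p}) q))
        exact (congrArg φ (map_add (M := DPA R M₀) G (Ideal.Quotient.mk (Ideal.span {p | DPRel R M₀ p}) p) (Ideal.Quotient.mk (Ideal.span {p | DPRel R M₀ p}) q))).trans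
          ((map_add φ _ _).trans (by
            rw [hp, hq]
            exact (map_add (M := DPA R M₀) (Ideal.Quotient.mk I) (Ideal.Quotient.mk (Ideal.span {p | DPRel R M₀ p}) p : DPA R M₀) (Ideal.Quotient.mk (Ideal.span {p | DPRel R M₀ p}) q)).symm))
    | mul_X p v hp =>
        have hXv : (Ideal.Quotient.mk (Ideal.span {p | DPRel R M₀ p})) (MvPolynomial.X v) =
            dpGamma R M₀ v.2 v.1 := rfl
        have h2 : dpGamma R M v.2 (g v.1) =
            (Ideal.Quotient.mk (Ideal.span {p | DPRel R M p})) (MvPolynomial.X (g v.1, v.2)) :=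
          rfl
        change φ (G (@HMul.hMul (DPA R M₀) (DPA R M₀) (DPA R M₀) _ (Ideal.Quotient.mk (Ideal.span {p | DPRel R M₀ p}) p) (Ideal.Quotient.mk (Ideal.span {p | DPRel R M₀ p}) (MvPolynomial.X v)))) =
          Ideal.Quotient.mk I (@HMul.hMul (DPA R M₀) (DPA R M₀) (DPA R M₀) _ (Ideal.Quotient.mk (Ideal.span {p | DPRel R M₀ p}) p) (Ideal.Quotient.mk (Ideal.span {p | DPRel R M₀ p}) (MvPolynomial.X v)))
        refine (congrArg φ (map_mul (M := DPA R M₀) G (Ideal.Quotient.mk (Ideal.span {p | DPRel R M₀ p}) p) (Ideal.Quotient.mk (Ideal.span {p | DPRel R M₀ p}) (MvPolynomial.X v)))).trans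
          ((map_mul φ _ _).trans (Eq.trans ?_ (map_mul (M := DPA R M₀) (Ideal.Quotient.mk I) (Ideal.Quotient.mk (Ideal.span {p | DPRel R M₀ p}) p : DPA R M₀) (Ideal.Quotient.mk (Ideal.span {p | DPRel R M₀ p}) (MvPolynomial.X v))).symm))
        rw [hp, hXv, hG, h2, hφmk, hψX, key v.2 (s (g v.1)) v.1 (by rw [hs])]
  refine ⟨hGsurj, le_antisymm ?_ ?_⟩
  · intro x hx
    have h0 : φ (G x) = 0 := by rw [RingHom.mem_ker.mp hx, map_zero]
    rw [hcomp] at h0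
    exact Ideal.Quotient.eq_zero_iff_mem.mp h0
  · rw [hIdef, Ideal.span_le]
    rintro y ⟨z, hz, rfl⟩
    exact RingHom.mem_ker.mpr (hGF z (SetLike.mem_coe.mp hz))
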